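/- Two Lüders operations Λ_A and Λ_B are coexistent if and only if A + B ≤ I or A and B are proportional (B = λA or A = λB for some 0 ≤ λ ≤ 1). -/

import Mathlib

open Matrix Kronecker
open scoped ComplexOrder

/-- A density matrix (quantum state). -/
def IsDensity {n : Type*} [Fintype n] (ρ : Matrix n n ℂ) : Prop :=
  ρ.PosSemidef ∧ ρ.trace = 1

/-- An effect: `0 ≤ A ≤ I`. -/
def IsEffect {n : Type*} [Fintype n] [DecidableEq n] (A : Matrix n n ℂ) : Prop :=
  A.PosSemidef ∧ (1 - A).PosSemidef

/-- Complete positivity, via the existence of a finite Kraus decomposition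
(equivalent to complete positivity in finite dimension). -/
def IsCP {n : Type*} [Fintype n] (Φ : Matrix n n ℂ → Matrix n n ℂ) : Prop :=
  ∃ (m : ℕ) (X : Fin m → Matrix n n ℂ), ∀ ρ, Φ ρ = ∑ k, X k * ρ * (X k)ᴴ

/-- A quantum operation: completely positive and `0 ≤ tr[Φ(ρ)] ≤ 1` on states. -/
def IsOperation {n : Type*} [Fintype n] (Φ : Matrix n n ℂ → Matrix n n ℂ) : Prop :=
  IsCP Φ ∧ ∀ ρ, IsDensity ρ → ∃ t : ℝ, (Φ ρ).trace = (t : ℂ) ∧ 0 ≤ t ∧ t ≤ 1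

/-- The Choi–Jamiolkowski operator `(Φ ⊗ I)(|ψ₊⟩⟨ψ₊|)` of a map on `d × d` matrices. -/
noncomputable def Choi {d : ℕ} (Φ : Matrix (Fin d) (Fin d) ℂ → Matrix (Fin d) (Fin d) ℂ) :
    Matrix (Fin d × Fin d) (Fin d × Fin d) ℂ :=
  ((d : ℂ))⁻¹ • ∑ j : Fin d, ∑ k : Fin d,
    (Φ (Matrix.single j k 1)) ⊗ₖ (Matrix.single j k 1)

/-- Partial trace over the first tensor factor. -/
noncomputable def ptr1 {d : ℕ} (M : Matrix (Fin d × Fin d) (Fin d × Fin d) ℂ) :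
    Matrix (Fin d) (Fin d) ℂ :=
  Matrix.of fun i j => ∑ k : Fin d, M (k, i) (k, j)

/-- Partial trace over the second tensor factor. -/
noncomputable def ptr2 {d : ℕ} (M : Matrix (Fin d × Fin d) (Fin d × Fin d) ℂ) :
    Matrix (Fin d) (Fin d) ℂ :=
  Matrix.of fun i j => ∑ k : Fin d, M (i, k) (j, k)

/-- Coexistence via a four-outcome instrument: four CP maps with trace-preserving sum,
`Φ = J₁ + J₂` and `Ψ = J₁ + J₃`. -/
def Coexistent4 {n : Type*} [Fintype n] (Φ Ψ : Matrix n n ℂ → Matrix n n ℂ) : Prop :=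
  ∃ J₁ J₂ J₃ J₄ : Matrix n n ℂ → Matrix n n ℂ,
    IsCP J₁ ∧ IsCP J₂ ∧ IsCP J₃ ∧ IsCP J₄ ∧
    (∀ ρ, IsDensity ρ → (J₁ ρ + J₂ ρ + J₃ ρ + J₄ ρ).trace = 1) ∧
    (∀ ρ, Φ ρ = J₁ ρ + J₂ ρ) ∧ (∀ ρ, Ψ ρ = J₁ ρ + J₃ ρ)

/-- Coexistence in Kraus form: a common family of Kraus operators `{X_j}` with
`∑ⱼ Xⱼ* Xⱼ ≤ I`, and index subsets realizing `Φ` and `Ψ`. -/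
def KrausCoexistent {n : Type*} [Fintype n] [DecidableEq n]
    (Φ Ψ : Matrix n n ℂ → Matrix n n ℂ) : Prop :=
  ∃ (m : ℕ) (X : Fin m → Matrix n n ℂ) (J₁ J₂ : Finset (Fin m)),
    (∀ ρ, Φ ρ = ∑ j ∈ J₁, X j * ρ * (X j)ᴴ) ∧
    (∀ ρ, Ψ ρ = ∑ j ∈ J₂, X j * ρ * (X j)ᴴ) ∧
    ((1 : Matrix n n ℂ) - ∑ j, (X j)ᴴ * X j).PosSemidef

/-- The positive semidefinite square root (as defined in Mathlib, Dec 2024). -/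
noncomputable def Matrix.PosSemidef.sqrt {n : Type*} [Fintype n] [DecidableEq n] {𝕜 : Type*} [RCLike 𝕜]
    {A : Matrix n n 𝕜} (hA : A.PosSemidef) : Matrix n n 𝕜 :=
  hA.1.eigenvectorUnitary.1 * diagonal ((↑) ∘ (fun x : ℝ => Real.sqrt x) ∘ hA.1.eigenvalues) *
  (star hA.1.eigenvectorUnitary : Matrix n n 𝕜)

lemma Matrix.PosSemidef.sqrt_eq_cfc {d : ℕ} {A : Matrix (Fin d) (Fin d) ℂ} (hA : A.PosSemidef) :
    hA.sqrt = cfc Real.sqrt A := by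
  rw [hA.1.cfc_eq]; rfl

lemma Matrix.PosSemidef.posSemidef_sqrt {d : ℕ} {A : Matrix (Fin d) (Fin d) ℂ}
    (hA : A.PosSemidef) : hA.sqrt.PosSemidef := by
  have hD : (diagonal ((↑) ∘ (fun x : ℝ => Real.sqrt x) ∘ hA.1.eigenvalues) :
      Matrix (Fin d) (Fin d) ℂ).PosSemidef :=
    posSemidef_diagonal_iff.mpr fun i => Complex.zero_le_real.mpr (Real.sqrt_nonneg _)
  simp only [Matrix.PosSemidef.sqrt]
  convert hD.mul_mul_conjTranspose_same (hA.1.eigenvectorUnitary : Matrix (Fin d) (Fin d) ℂ)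
    using 1
  rfl

lemma Matrix.PosSemidef.sqrt_mul_self {d : ℕ} {A : Matrix (Fin d) (Fin d) ℂ}
    (hA : A.PosSemidef) : hA.sqrt * hA.sqrt = A := by
  have hsa : IsSelfAdjoint A := hA.1.isSelfAdjoint
  rw [hA.sqrt_eq_cfc, ← cfc_mul Real.sqrt Real.sqrt A, hA.1.cfc_eq]
  conv_rhs => rw [hA.1.spectral_theorem]
  have he : ((fun x => Real.sqrt x * Real.sqrt x) ∘ hA.1.eigenvalues) = hA.1.eigenvalues :=
    funext fun i => Real.mul_self_sqrt (hA.eigenvalues_nonneg i)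
  simp only [Matrix.IsHermitian.cfc, he]

lemma aux_entry {d : ℕ} (M N : Matrix (Fin d) (Fin d) ℂ) (k l i i' : Fin d) :
    (M * Matrix.single k l (1:ℂ) * Nᴴ) i i' = M i k * star (N i' l) := by
  simp [Matrix.mul_apply, Matrix.single, Matrix.conjTranspose_apply, ite_and,
    Finset.sum_ite_eq, Finset.mul_sum, mul_comm]

lemma psd_diag_nonneg {d : ℕ} {M : Matrix (Fin d) (Fin d) ℂ} (hM : M.PosSemidef) (i : Fin d) :
    0 ≤ M i i := by
  exact hM.diag_nonneg

lemma psd_trace_real {d : ℕ} {M : Matrix (Fin d) (Fin d) ℂ} (hM : M.PosSemidef) :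
    ∃ r : ℝ, 0 ≤ r ∧ M.trace = (r : ℂ) := by
  have h : 0 ≤ M.trace := Finset.sum_nonneg fun i _ => psd_diag_nonneg hM i
  rw [Complex.le_def] at h
  exact ⟨M.trace.re, by simpa using h.1, by
    rw [Complex.ext_iff]; constructor <;> simp [← h.2]⟩

lemma psd_trace_eq_zero {d : ℕ} {M : Matrix (Fin d) (Fin d) ℂ} (hM : M.PosSemidef)
    (h : M.trace = 0) : M = 0 := by
  exact hM.trace_eq_zero_iff.mp h

lemma kraus_rank_one {d m : ℕ} {C : Matrix (Fin d) (Fin d) ℂ} {X : Fin m → Matrix (Fin d) (Fin d) ℂ}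
    {S : Finset (Fin m)} (hC : C ≠ 0)
    (h : ∀ ρ, ∑ j ∈ S, X j * ρ * (X j)ᴴ = C * ρ * Cᴴ) :
    ∃ c : Fin m → ℂ, (∀ j ∈ S, X j = c j • C) ∧ ∑ j ∈ S, c j * star (c j) = 1 := by
  have key : ∀ k l i i', ∑ j ∈ S, X j i k * star (X j i' l) = C i k * star (C i' l) := by
    intro k l i i'
    have h1 := congrFun (congrFun (h (Matrix.single k l 1)) i) i'
    rw [Matrix.sum_apply] at h1
    simpa [aux_entry] using h1
  obtain ⟨i₀, k₀, hC0⟩ : ∃ i₀ k₀, C i₀ k₀ ≠ 0 := by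
    by_contra hcon; push_neg at hcon
    exact hC (by ext i j; simpa using hcon i j)
  set c : Fin m → ℂ := fun j => X j i₀ k₀ / C i₀ k₀ with hc
  have hprop : ∀ j ∈ S, ∀ i k, X j i k = c j * C i k := by
    intro j hj i k
    set u : Fin m → ℂ := fun j' => X j' i k * C i₀ k₀ - X j' i₀ k₀ * C i k with hu
    have hsum : ∑ j' ∈ S, u j' * star (u j') = 0 := by
      have step : ∑ j' ∈ S, u j' * star (u j')
          = (∑ j' ∈ S, X j' i k * star (X j' i k)) * (C i₀ k₀ * star (C i₀ k₀))
            - ((∑ j' ∈ S, X j' i k * star (X j' i₀ k₀)) * (C i₀ k₀ * star (C i k))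
            + (∑ j' ∈ S, X j' i₀ k₀ * star (X j' i k)) * (C i k * star (C i₀ k₀)))
            + (∑ j' ∈ S, X j' i₀ k₀ * star (X j' i₀ k₀)) * (C i k * star (C i k)) := by
        simp only [Finset.sum_mul, ← Finset.sum_add_distrib, ← Finset.sum_sub_distrib]
        refine Finset.sum_congr rfl fun j' _ => ?_
        simp only [hu, star_sub, star_mul']
        ring
      rw [step, key k k i i, key k k₀ i i₀, key k₀ k i₀ i, key k₀ k₀ i₀ i₀]
      ring
    have hsum' : ∑ j' ∈ S, Complex.normSq (u j') = 0 := by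
      have h2 : ∑ j' ∈ S, (Complex.normSq (u j') : ℂ) = 0 := by
        rw [← hsum]
        exact Finset.sum_congr rfl fun j' _ => (Complex.mul_conj (u j')).symm
      have h3 : ((∑ j' ∈ S, Complex.normSq (u j') : ℝ) : ℂ) = 0 := by push_cast; exact h2
      exact_mod_cast h3
    have hz := (Finset.sum_eq_zero_iff_of_nonneg
      (fun j' _ => Complex.normSq_nonneg (u j'))).mp hsum' j hj
    have hz' : u j = 0 := Complex.normSq_eq_zero.mp hz
    have : X j i k * C i₀ k₀ = X j i₀ k₀ * C i k := by
      have := sub_eq_zero.mp hz'; simpa [hu] using this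
    simp only [hc]
    rw [div_mul_eq_mul_div, eq_div_iff hC0]
    linear_combination this
  have hXc : ∀ j ∈ S, X j = c j • C := fun j hj => by
    ext i k; simpa using hprop j hj i k
  refine ⟨c, hXc, ?_⟩
  have hkey := key k₀ k₀ i₀ i₀
  have hne : C i₀ k₀ * star (C i₀ k₀) ≠ 0 := mul_ne_zero hC0 (star_ne_zero.mpr hC0)
  have hterm : ∀ j, c j * star (c j) * (C i₀ k₀ * star (C i₀ k₀))
      = X j i₀ k₀ * star (X j i₀ k₀) := by
    intro j
    have e : c j * C i₀ k₀ = X j i₀ k₀ := div_mul_cancel₀ _ hC0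
    calc c j * star (c j) * (C i₀ k₀ * star (C i₀ k₀))
        = (c j * C i₀ k₀) * star (c j * C i₀ k₀) := by rw [star_mul']; ring
      _ = X j i₀ k₀ * star (X j i₀ k₀) := by rw [e]
  have hfin : (∑ j ∈ S, c j * star (c j)) * (C i₀ k₀ * star (C i₀ k₀))
      = ∑ j ∈ S, X j i₀ k₀ * star (X j i₀ k₀) := by
    rw [Finset.sum_mul]; exact Finset.sum_congr rfl fun j _ => hterm j
  rw [hkey] at hfin
  exact mul_right_cancel₀ hne (by rw [hfin, one_mul])

lemma psd_smul {d : ℕ} {M : Matrix (Fin d) (Fin d) ℂ} (hM : M.PosSemidef) {r : ℝ} (hr : 0 ≤ r) :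
    ((r : ℂ) • M).PosSemidef := by
  constructor
  · show ((r:ℂ) • M)ᴴ = _
    rw [Matrix.conjTranspose_smul, hM.1.eq]
    simp
  · exact (hM.smul (Complex.zero_le_real.mpr hr)).2

lemma sqrt_smul {d : ℕ} {A : Matrix (Fin d) (Fin d) ℂ} (hA : A.PosSemidef) {lam : ℝ}
    (h0 : 0 ≤ lam) (hB : ((lam : ℂ) • A).PosSemidef) :
    hB.sqrt = (Real.sqrt lam : ℂ) • hA.sqrt := by
  have hsa : IsSelfAdjoint A := hA.1.isSelfAdjoint
  rw [hB.sqrt_eq_cfc, hA.sqrt_eq_cfc, Complex.coe_smul, ← cfc_comp_smul lam Real.sqrt A]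
  simp_rw [smul_eq_mul, Real.sqrt_mul h0]
  rw [cfc_const_mul (Real.sqrt lam) Real.sqrt A, Complex.coe_smul]

lemma smul_kraus {d : ℕ} (M ρ : Matrix (Fin d) (Fin d) ℂ) (hM : Mᴴ = M) (c : ℂ) :
    (c • M) * ρ * (c • M)ᴴ = (c * star c) • (M * ρ * M) := by
  rw [Matrix.conjTranspose_smul, hM, Matrix.smul_mul, Matrix.smul_mul, Matrix.mul_smul,
    smul_smul]

lemma smul_ctmul {d : ℕ} (M : Matrix (Fin d) (Fin d) ℂ) (c : ℂ) :
    (c • M)ᴴ * (c • M) = (c * star c) • (Mᴴ * M) := by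
  rw [Matrix.conjTranspose_smul, Matrix.smul_mul, Matrix.mul_smul, smul_smul, mul_comm]

lemma psd_sum {d m : ℕ} (T : Finset (Fin m)) (f : Fin m → Matrix (Fin d) (Fin d) ℂ)
    (h : ∀ j, (f j).PosSemidef) : (∑ j ∈ T, f j).PosSemidef :=
  Finset.sum_induction f _ (fun _ _ ha hb => ha.add hb) Matrix.PosSemidef.zero fun j _ => h j

lemma stmt16_aux (d : ℕ) (A B : Matrix (Fin d) (Fin d) ℂ)
    (hA : A.PosSemidef) (hA' : ((1 : Matrix (Fin d) (Fin d) ℂ) - A).PosSemidef)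
    (hB : B.PosSemidef) (hB' : ((1 : Matrix (Fin d) (Fin d) ℂ) - B).PosSemidef) :
    (∃ (m : ℕ) (X : Fin m → Matrix (Fin d) (Fin d) ℂ) (J₁ J₂ : Finset (Fin m)),
      (∀ ρ, hA.sqrt * ρ * hA.sqrt = ∑ j ∈ J₁, X j * ρ * (X j)ᴴ) ∧
      (∀ ρ, hB.sqrt * ρ * hB.sqrt = ∑ j ∈ J₂, X j * ρ * (X j)ᴴ) ∧
      ((1 : Matrix (Fin d) (Fin d) ℂ) - ∑ j, (X j)ᴴ * X j).PosSemidef) ↔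
      (((1 : Matrix (Fin d) (Fin d) ℂ) - (A + B)).PosSemidef ∨
        ∃ lam : ℝ, 0 ≤ lam ∧ lam ≤ 1 ∧ (B = (lam : ℂ) • A ∨ A = (lam : ℂ) • B)) := by
  have hSA : (hA.sqrt)ᴴ = hA.sqrt := hA.posSemidef_sqrt.1
  have hSB : (hB.sqrt)ᴴ = hB.sqrt := hB.posSemidef_sqrt.1
  constructor
  · rintro ⟨m, X, J₁, J₂, hΦ, hΨ, hK⟩
    by_cases hA0 : hA.sqrt = 0
    · refine Or.inr ⟨0, le_refl 0, zero_le_one, Or.inr ?_⟩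
      rw [← hA.sqrt_mul_self, hA0]; simp
    by_cases hB0 : hB.sqrt = 0
    · refine Or.inr ⟨0, le_refl 0, zero_le_one, Or.inl ?_⟩
      rw [← hB.sqrt_mul_self, hB0]; simp
    obtain ⟨c, hc1, hc2⟩ := kraus_rank_one hA0 (fun ρ => by rw [hSA]; exact (hΦ ρ).symm)
    obtain ⟨e, he1, he2⟩ := kraus_rank_one hB0 (fun ρ => by rw [hSB]; exact (hΨ ρ).symm)
    by_cases hzero : ∀ j ∈ J₁ ∩ J₂, X j = 0
    · left
      have hsumA : ∑ j ∈ J₁, (X j)ᴴ * X j = A := by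
        have hterm : ∀ j ∈ J₁, (X j)ᴴ * X j = (c j * star (c j)) • A := by
          intro j hj
          rw [hc1 j hj, smul_ctmul, hSA, hA.sqrt_mul_self]
        rw [Finset.sum_congr rfl hterm, ← Finset.sum_smul, hc2, one_smul]
      have hsumB : ∑ j ∈ J₂, (X j)ᴴ * X j = B := by
        have hterm : ∀ j ∈ J₂, (X j)ᴴ * X j = (e j * star (e j)) • B := by
          intro j hj
          rw [he1 j hj, smul_ctmul, hSB, hB.sqrt_mul_self]
        rw [Finset.sum_congr rfl hterm, ← Finset.sum_smul, he2, one_smul]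
      have hvanish : ∑ j ∈ J₁ ∩ J₂, (X j)ᴴ * X j = 0 :=
        Finset.sum_eq_zero fun j hj => by rw [hzero j hj]; simp
      have hunion : ∑ j ∈ J₁ ∪ J₂, (X j)ᴴ * X j = A + B := by
        have h2 := Finset.sum_union_inter (s₁ := J₁) (s₂ := J₂) (f := fun j => (X j)ᴴ * X j)
        rw [hvanish, add_zero, hsumA, hsumB] at h2
        exact h2
      have hcompl : (∑ j ∈ (J₁ ∪ J₂)ᶜ, (X j)ᴴ * X j).PosSemidef :=
        psd_sum _ _ fun j => Matrix.posSemidef_conjTranspose_mul_self (X j)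
      have key : (1 : Matrix (Fin d) (Fin d) ℂ) - (A + B)
          = ((1 : Matrix (Fin d) (Fin d) ℂ) - ∑ j, (X j)ᴴ * X j)
            + ∑ j ∈ (J₁ ∪ J₂)ᶜ, (X j)ᴴ * X j := by
        rw [← Finset.sum_add_sum_compl (J₁ ∪ J₂) (fun j => (X j)ᴴ * X j), hunion]
        abel
      rw [key]; exact hK.add hcompl
    · push_neg at hzero
      obtain ⟨j₀, hj₀, hXne⟩ := hzero
      obtain ⟨hj1, hj2⟩ := Finset.mem_inter.mp hj₀
      have hcj : c j₀ ≠ 0 := fun h => hXne (by rw [hc1 j₀ hj1, h, zero_smul])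
      have hej : e j₀ ≠ 0 := fun h => hXne (by rw [he1 j₀ hj2, h, zero_smul])
      have hSBeq : hB.sqrt = (c j₀ / e j₀) • hA.sqrt := by
        have h1 : e j₀ • hB.sqrt = c j₀ • hA.sqrt := by rw [← he1 j₀ hj2, ← hc1 j₀ hj1]
        calc hB.sqrt = (e j₀)⁻¹ • (e j₀ • hB.sqrt) := by
              rw [smul_smul, inv_mul_cancel₀ hej, one_smul]
          _ = (e j₀)⁻¹ • (c j₀ • hA.sqrt) := by rw [h1]
          _ = (c j₀ / e j₀) • hA.sqrt := by rw [smul_smul, div_eq_mul_inv, mul_comm]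
      obtain ⟨ra, hra0, hra⟩ := psd_trace_real hA.posSemidef_sqrt
      obtain ⟨rb, hrb0, hrb⟩ := psd_trace_real hB.posSemidef_sqrt
      have hraneq : ra ≠ 0 := by
        intro h
        apply hA0
        apply psd_trace_eq_zero hA.posSemidef_sqrt
        rw [hra, h, Complex.ofReal_zero]
      have htr : (rb : ℂ) = (c j₀ / e j₀) * ra := by
        have h2 := congrArg Matrix.trace hSBeq
        rw [Matrix.trace_smul, smul_eq_mul, hra, hrb] at h2
        exact h2
      have hracne : (ra : ℂ) ≠ 0 := by exact_mod_cast hraneq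
      have hz : (c j₀ / e j₀) = ((rb / ra : ℝ) : ℂ) := by
        rw [Complex.ofReal_div, htr, mul_div_cancel_right₀ _ hracne]
      have hr0 : (0:ℝ) ≤ rb / ra := div_nonneg hrb0 hra0
      set r : ℝ := rb / ra with hrdef
      have hBA : B = ((r^2 : ℝ) : ℂ) • A := by
        calc B = hB.sqrt * hB.sqrt := (hB.sqrt_mul_self).symm
          _ = ((r:ℂ) • hA.sqrt) * ((r:ℂ) • hA.sqrt) := by rw [hSBeq, hz]
          _ = ((r^2 : ℝ) : ℂ) • A := by
              rw [Matrix.smul_mul, Matrix.mul_smul, smul_smul, hA.sqrt_mul_self]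
              congr 1
              push_cast
              ring
      by_cases hr1 : r^2 ≤ 1
      · exact Or.inr ⟨r^2, sq_nonneg r, hr1, Or.inl hBA⟩
      · push_neg at hr1
        have hne2 : (r^2) ≠ 0 := by nlinarith
        refine Or.inr ⟨(r^2)⁻¹, inv_nonneg.mpr (sq_nonneg r), ?_, Or.inr ?_⟩
        · exact inv_le_one_of_one_le₀ hr1.le
        · rw [hBA, smul_smul, ← Complex.ofReal_mul, inv_mul_cancel₀ hne2]
          simp
  · rintro (h1 | ⟨lam, hl0, hl1, hBA | hAB⟩)
    · refine ⟨2, ![hA.sqrt, hB.sqrt], {0}, {1}, fun ρ => ?_, fun ρ => ?_, ?_⟩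
      · simp [hSA]
      · simp [hSB]
      · have h2 : ∑ j : Fin 2, (![hA.sqrt, hB.sqrt] j)ᴴ * (![hA.sqrt, hB.sqrt] j) = A + B := by
          rw [Fin.sum_univ_two]
          simp [hSA, hSB, hA.sqrt_mul_self, hB.sqrt_mul_self]
        rw [h2]; exact h1
    · subst hBA
      have hs := sqrt_smul hA hl0 hB
      have c1 : ((Real.sqrt lam : ℂ)) * star ((Real.sqrt lam : ℂ)) = (lam : ℂ) := by
        rw [RCLike.star_def, Complex.conj_ofReal, ← Complex.ofReal_mul, Real.mul_self_sqrt hl0]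
      have c2 : ((Real.sqrt (1-lam) : ℂ)) * star ((Real.sqrt (1-lam) : ℂ)) = ((1-lam : ℝ) : ℂ) := by
        rw [RCLike.star_def, Complex.conj_ofReal, ← Complex.ofReal_mul,
          Real.mul_self_sqrt (by linarith)]
      refine ⟨2, ![(Real.sqrt lam : ℂ) • hA.sqrt, (Real.sqrt (1-lam) : ℂ) • hA.sqrt],
        Finset.univ, {0}, fun ρ => ?_, fun ρ => ?_, ?_⟩
      · show hA.sqrt * ρ * hA.sqrt = _
        rw [Fin.sum_univ_two]
        simp only [Matrix.cons_val_zero, Matrix.cons_val_one, Matrix.head_cons]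
        rw [smul_kraus _ _ hSA, smul_kraus _ _ hSA, c1, c2, ← add_smul]
        have h3 : (lam:ℂ) + ((1-lam : ℝ):ℂ) = 1 := by push_cast; ring
        rw [h3, one_smul]
      · show hB.sqrt * ρ * hB.sqrt = _
        rw [Finset.sum_singleton]
        simp only [Matrix.cons_val_zero]
        rw [hs, Matrix.conjTranspose_smul, RCLike.star_def, Complex.conj_ofReal, hSA]
      · have h2 : ∑ j : Fin 2, ((![(Real.sqrt lam : ℂ) • hA.sqrt,
            (Real.sqrt (1-lam) : ℂ) • hA.sqrt]) j)ᴴ * ((![(Real.sqrt lam : ℂ) • hA.sqrt,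
            (Real.sqrt (1-lam) : ℂ) • hA.sqrt]) j) = A := by
          rw [Fin.sum_univ_two]
          simp only [Matrix.cons_val_zero, Matrix.cons_val_one, Matrix.head_cons]
          rw [smul_ctmul, smul_ctmul, c1, c2, hSA, hA.sqrt_mul_self, ← add_smul]
          have h3 : (lam:ℂ) + ((1-lam : ℝ):ℂ) = 1 := by push_cast; ring
          rw [h3, one_smul]
        rw [h2]; exact hA'
    · subst hAB
      have hs := sqrt_smul hB hl0 hA
      have c1 : ((Real.sqrt lam : ℂ)) * star ((Real.sqrt lam : ℂ)) = (lam : ℂ) := by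
        rw [RCLike.star_def, Complex.conj_ofReal, ← Complex.ofReal_mul, Real.mul_self_sqrt hl0]
      have c2 : ((Real.sqrt (1-lam) : ℂ)) * star ((Real.sqrt (1-lam) : ℂ)) = ((1-lam : ℝ) : ℂ) := by
        rw [RCLike.star_def, Complex.conj_ofReal, ← Complex.ofReal_mul,
          Real.mul_self_sqrt (by linarith)]
      refine ⟨2, ![(Real.sqrt lam : ℂ) • hB.sqrt, (Real.sqrt (1-lam) : ℂ) • hB.sqrt],
        {0}, Finset.univ, fun ρ => ?_, fun ρ => ?_, ?_⟩
      · show hA.sqrt * ρ * hA.sqrt = _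
        rw [Finset.sum_singleton]
        simp only [Matrix.cons_val_zero]
        rw [hs, Matrix.conjTranspose_smul, RCLike.star_def, Complex.conj_ofReal, hSB]
      · show hB.sqrt * ρ * hB.sqrt = _
        rw [Fin.sum_univ_two]
        simp only [Matrix.cons_val_zero, Matrix.cons_val_one, Matrix.head_cons]
        rw [smul_kraus _ _ hSB, smul_kraus _ _ hSB, c1, c2, ← add_smul]
        have h3 : (lam:ℂ) + ((1-lam : ℝ):ℂ) = 1 := by push_cast; ring
        rw [h3, one_smul]
      · have h2 : ∑ j : Fin 2, ((![(Real.sqrt lam : ℂ) • hB.sqrt,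
            (Real.sqrt (1-lam) : ℂ) • hB.sqrt]) j)ᴴ * ((![(Real.sqrt lam : ℂ) • hB.sqrt,
            (Real.sqrt (1-lam) : ℂ) • hB.sqrt]) j) = B := by
          rw [Fin.sum_univ_two]
          simp only [Matrix.cons_val_zero, Matrix.cons_val_one, Matrix.head_cons]
          rw [smul_ctmul, smul_ctmul, c1, c2, hSB, hB.sqrt_mul_self, ← add_smul]
          have h3 : (lam:ℂ) + ((1-lam : ℝ):ℂ) = 1 := by push_cast; ring
          rw [h3, one_smul]
        rw [h2]; exact hB'

/-- two Lüders operations `Λ_A`, `Λ_B` are coexistent iff `A + B ≤ I`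
or `A` and `B` are proportional (`B = λA` or `A = λB` with `0 ≤ λ ≤ 1`). -/
theorem stmt16 (d : ℕ) (A B : Matrix (Fin d) (Fin d) ℂ)
    (hA : A.PosSemidef) (hA' : ((1 : Matrix (Fin d) (Fin d) ℂ) - A).PosSemidef)
    (hB : B.PosSemidef) (hB' : ((1 : Matrix (Fin d) (Fin d) ℂ) - B).PosSemidef) :
    KrausCoexistent (fun ρ => hA.sqrt * ρ * hA.sqrt) (fun ρ => hB.sqrt * ρ * hB.sqrt) ↔
      (((1 : Matrix (Fin d) (Fin d) ℂ) - (A + B)).PosSemidef ∨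
        ∃ lam : ℝ, 0 ≤ lam ∧ lam ≤ 1 ∧ (B = (lam : ℂ) • A ∨ A = (lam : ℂ) • B)) := by
  exact stmt16_aux d A B hA hA' hB hB'
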